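/- Let N, M ∈ M_n(ℂ) be nilpotent matrices. If exp(N) = exp(M), then N = M; that is, the matrix exponential is injective on nilpotent matrices. -/

import Mathlib

open Polynomial Finset

noncomputable def Eexp (m : ℕ) : ℂ[X] := ∑ j ∈ range m, C ((j.factorial : ℂ)⁻¹) * X ^ j

noncomputable def Llog (d : ℕ) : ℂ[X] := ∑ k ∈ range d, C ((-1 : ℂ)^k / (k+1)) * X ^ (k+1)

noncomputable def Geo (d : ℕ) : ℂ[X] := ∑ k ∈ range d, C ((-1 : ℂ)^k) * X ^ k

lemma Eexp_succ (m : ℕ) : Eexp (m+1) = Eexp m + C ((m.factorial : ℂ)⁻¹) * X ^ m := by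
  simp only [Eexp]; rw [Finset.sum_range_succ]

lemma Geo_succ (d : ℕ) : Geo (d+1) = Geo d + C ((-1 : ℂ)^d) * X ^ d := by
  simp only [Geo]; rw [Finset.sum_range_succ]

lemma geo_mul (d : ℕ) : (1 + X) * Geo d = 1 - C ((-1 : ℂ)^d) * X ^ d := by
  induction d with
  | zero => simp [Geo]
  | succ d ih =>
    rw [Geo_succ, mul_add, ih, pow_succ]
    simp only [C_mul, C_neg, C_1]
    ring

lemma deriv_Llog (d : ℕ) : derivative (Llog d) = Geo d := by
  unfold Llog Geo
  rw [derivative_sum]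
  refine Finset.sum_congr rfl fun k _ => ?_
  rw [derivative_C_mul, derivative_X_pow, Nat.add_sub_cancel, ← mul_assoc, ← C_mul]
  congr 1
  have hk : ((k : ℂ) + 1) ≠ 0 := Nat.cast_add_one_ne_zero k
  push_cast
  field_simp

lemma deriv_Eexp (m : ℕ) : derivative (Eexp (m+1)) = Eexp m := by
  induction m with
  | zero => simp [Eexp]
  | succ m ih =>
    rw [Eexp_succ (m+1), derivative_add, ih, derivative_C_mul, derivative_X_pow,
      Nat.add_sub_cancel, Eexp_succ m, ← mul_assoc, ← C_mul]
    congr 2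
    have h1 : (m.factorial : ℂ) ≠ 0 := Nat.cast_ne_zero.mpr m.factorial_ne_zero
    have h2 : ((m : ℂ) + 1) ≠ 0 := Nat.cast_add_one_ne_zero m
    rw [Nat.factorial_succ]
    push_cast
    field_simp

lemma eval_zero_Eexp (m : ℕ) : (Eexp (m+1)).eval 0 = 1 := by
  unfold Eexp
  rw [eval_finset_sum, Finset.sum_eq_single 0]
  · simp
  · intro j _ hj
    simp [zero_pow hj]
  · simp

lemma eval_zero_Llog (d : ℕ) : (Llog d).eval 0 = 0 := by
  unfold Llog
  rw [eval_finset_sum]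
  exact Finset.sum_eq_zero fun k _ => by simp

lemma X_dvd_u (m : ℕ) : X ∣ (Eexp (m+1) - 1) := by
  rw [Polynomial.X_dvd_iff, coeff_sub, coeff_zero_eq_eval_zero, eval_zero_Eexp]
  simp

/-- the key integration lemma -/
lemma X_pow_dvd_of_deriv {g : ℂ[X]} {s : ℕ} (h0 : g.coeff 0 = 0)
    (hd : X ^ s ∣ derivative g) : X ^ (s+1) ∣ g := by
  rw [X_pow_dvd_iff] at hd ⊢
  intro k hk
  cases k with
  | zero => exact h0
  | succ j =>
    have := hd j (by omega)
    rw [coeff_derivative] at this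
    have hj : ((j : ℂ) + 1) ≠ 0 := Nat.cast_add_one_ne_zero j
    exact (mul_eq_zero.mp this).resolve_right hj

/-- log(exp X) = X mod X^(s+1) -/
lemma key_poly (s : ℕ) :
    X ^ (s+1) ∣ (Llog (s+1)).comp (Eexp (s+1) - 1) - X := by
  set u : ℂ[X] := Eexp (s+1) - 1 with hu
  apply X_pow_dvd_of_deriv
  · rw [coeff_sub, coeff_zero_eq_eval_zero, coeff_zero_eq_eval_zero, eval_comp]
    have h0 : u.eval 0 = 0 := by rw [hu]; simp [eval_zero_Eexp]
    rw [h0, eval_zero_Llog]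
    simp
  · rw [derivative_sub, derivative_X, derivative_comp, deriv_Llog]
    have hdu : derivative u = Eexp s := by
      rw [hu, derivative_sub, derivative_one, sub_zero, deriv_Eexp]
    rw [hdu]
    have hE : Eexp s = (1 + u) - C ((s.factorial : ℂ)⁻¹) * X ^ s := by
      rw [hu, Eexp_succ s]; ring
    rw [hE, sub_mul, add_mul]
    have h1 : (1 + u) * (Geo (s+1)).comp u = 1 - C ((-1:ℂ)^(s+1)) * u ^ (s+1) := by
      have := congrArg (fun p => p.comp u) (geo_mul (s+1))
      simpa [add_comp, mul_comp, sub_comp, one_comp, X_comp, C_comp, pow_comp] using this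
    rw [← add_mul, h1]
    have hXu : X ∣ u := X_dvd_u s
    have h2 : X ^ s ∣ u ^ (s+1) :=
      dvd_trans (pow_dvd_pow X (by omega)) (pow_dvd_pow_of_dvd hXu (s+1))
    have h3 : X ^ s ∣ (X:ℂ[X]) ^ s := dvd_rfl
    have heq : (1 - C ((-1:ℂ)^(s+1)) * u ^ (s+1)
          - C ((s.factorial : ℂ)⁻¹) * X ^ s * (Geo (s+1)).comp u) - 1
        = -(C ((-1:ℂ)^(s+1)) * u ^ (s+1))
          - C ((s.factorial : ℂ)⁻¹) * X ^ s * (Geo (s+1)).comp u := by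
      ring
    rw [heq]
    exact dvd_sub (dvd_neg.mpr (h2.mul_left _)) ((h3.mul_left _).mul_right _)

/-- exp of a nilpotent matrix equals the truncated polynomial -/
lemma exp_eq_aeval_Eexp {n : ℕ} (A : Matrix (Fin n) (Fin n) ℂ) {m : ℕ} (hA : A ^ m = 0) :
    NormedSpace.exp A = Polynomial.aeval A (Eexp m) := by
  simp only [NormedSpace.exp_eq_tsum ℂ]
  rw [tsum_eq_sum (s := Finset.range m) (f := fun j => (j.factorial : ℂ)⁻¹ • A ^ j)]
  · rw [Eexp, map_sum]
    refine Finset.sum_congr rfl fun j _ => ?_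
    rw [map_mul, aeval_C, aeval_X_pow, Algebra.smul_def]
  · intro j hj
    have : A ^ j = 0 := pow_eq_zero_of_le (by simpa using hj) hA
    simp [this]

lemma recover {n : ℕ} (A : Matrix (Fin n) (Fin n) ℂ) {s : ℕ} (hA : A ^ (s+1) = 0) :
    Polynomial.aeval (NormedSpace.exp A - 1) (Llog (s+1)) = A := by
  obtain ⟨h, hh⟩ := key_poly s
  have hcomp : Polynomial.aeval (NormedSpace.exp A - 1) (Llog (s+1))
      = Polynomial.aeval A ((Llog (s+1)).comp (Eexp (s+1) - 1)) := by
    rw [aeval_comp, map_sub, exp_eq_aeval_Eexp A hA, map_one]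
  rw [hcomp]
  have := congrArg (Polynomial.aeval A) hh
  rw [map_sub, aeval_X, map_mul, map_pow, aeval_X, hA, zero_mul, sub_eq_zero] at this
  exact this

/-- The matrix exponential is injective on nilpotent matrices. -/
theorem exp_injOn_nilpotent {n : ℕ} (N M : Matrix (Fin n) (Fin n) ℂ)
    (hN : IsNilpotent N) (hM : IsNilpotent M)
    (h : NormedSpace.exp N = NormedSpace.exp M) : N = M := by
  obtain ⟨k, hk⟩ := hN
  obtain ⟨l, hl⟩ := hM
  set s := max k l
  have hNs : N ^ (s+1) = 0 := pow_eq_zero_of_le (by omega) hk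
  have hMs : M ^ (s+1) = 0 := pow_eq_zero_of_le (by omega) hl
  calc N = Polynomial.aeval (NormedSpace.exp N - 1) (Llog (s+1)) := (recover N hNs).symm
    _ = Polynomial.aeval (NormedSpace.exp M - 1) (Llog (s+1)) := by rw [h]
    _ = M := recover M hMs
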